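/- For real α, the integral I(α, β) = ∫₀¹ (c(x)^{α+1}·x^{−β} + c(1−x)^{α+1}·(1−x)^{−β} − 1)·(x(1−x))^{−3/2} dx converges (is finite) for every β < 2α + 3/2, where c(x) = x²(3−2x). -/

import Mathlib

/-- The limiting split function `c(x) = x²(3-2x)`. -/
def cfun (x : ℝ) : ℝ := x ^ 2 * (3 - 2 * x)

open MeasureTheory Set Real

lemma rpow_integrableOn_half {p : ℝ} (hp : -1 < p) :
    IntegrableOn (fun x : ℝ => x ^ p) (Ioo 0 (1/2)) := by
  have h := intervalIntegral.intervalIntegrable_rpow' (a := 0) (b := 1/2) hp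
  rw [intervalIntegrable_iff, uIoc_of_le (by norm_num)] at h
  exact h.mono_set Ioo_subset_Ioc_self

/-- Lipschitz-type bound for `g(x) = cfun(1-x)^(α+1) (1-x)^(-β)` near 0. -/
lemma gfun_bound (α β : ℝ) : ∃ C : ℝ, 0 ≤ C ∧ ∀ x ∈ Icc (0:ℝ) (1/2),
    |cfun (1 - x) ^ (α + 1) * (1 - x) ^ (-β) - 1| ≤ C * x := by
  set g : ℝ → ℝ := fun x => cfun (1 - x) ^ (α + 1) * (1 - x) ^ (-β) with hg
  have hopen : IsOpen (Ioo (-(1:ℝ)/4) (3/4)) := isOpen_Ioo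
  have hcd : ContDiffOn ℝ 1 g (Ioo (-(1:ℝ)/4) (3/4)) := by
    intro x hx
    have h1 : (0:ℝ) < 1 - x := by linarith [hx.1, hx.2]
    have h2 : cfun (1 - x) ≠ 0 := by
      have : (0:ℝ) < (1-x)^2 * (3 - 2*(1-x)) := by
        apply mul_pos (by positivity); linarith [hx.1, hx.2]
      simpa [cfun] using this.ne'
    have hc1 : ContDiffAt ℝ 1 (fun x : ℝ => cfun (1 - x)) x := by
      have : ContDiff ℝ 1 (fun x : ℝ => cfun (1 - x)) := by
        unfold cfun; fun_prop
      exact this.contDiffAt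
    have hc2 : ContDiffAt ℝ 1 (fun x : ℝ => (1:ℝ) - x) x := by fun_prop
    exact (((hc1.rpow_const_of_ne h2).mul
      (hc2.rpow_const_of_ne h1.ne')).contDiffWithinAt)
  have hsub : Icc (0:ℝ) (1/2) ⊆ Ioo (-(1:ℝ)/4) (3/4) := fun x hx => by
    exact ⟨by linarith [hx.1, hx.2], by linarith [hx.1, hx.2]⟩
  have hderiv : ContinuousOn (deriv g) (Ioo (-(1:ℝ)/4) (3/4)) :=
    hcd.continuousOn_deriv_of_isOpen hopen le_rfl
  obtain ⟨C, hC⟩ := (isCompact_Icc (a := (0:ℝ)) (b := 1/2)).exists_bound_of_continuousOn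
    (hderiv.mono hsub)
  have hC0 : 0 ≤ C := le_trans (norm_nonneg _) (hC 0 (by constructor <;> norm_num))
  refine ⟨C, hC0, fun x hx => ?_⟩
  have hdiff : ∀ y ∈ Icc (0:ℝ) (1/2), DifferentiableAt ℝ g y := fun y hy =>
    (hcd.contDiffAt (hopen.mem_nhds (hsub hy))).differentiableAt one_ne_zero
  have key := Convex.norm_image_sub_le_of_norm_deriv_le hdiff hC (convex_Icc _ _)
    (by constructor <;> norm_num : (0:ℝ) ∈ Icc (0:ℝ) (1/2)) hx
  have hg0 : g 0 = 1 := by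
    have : cfun 1 = 1 := by norm_num [cfun]
    simp [hg, this]
  rw [hg0] at key
  calc |g x - 1| ≤ C * ‖x - 0‖ := key
  _ = C * x := by rw [sub_zero, Real.norm_eq_abs, abs_of_nonneg hx.1]

lemma one_sub_bound {x : ℝ} (hx : x ∈ Ioo (0:ℝ) (1/2)) :
    (1 - x) ^ (-(3/2) : ℝ) ≤ 4 := by
  have h1 : (1/2 : ℝ) ≤ 1 - x := by cases hx; linarith
  have h2 : (1 - x) ^ (-(3/2) : ℝ) ≤ ((1:ℝ)/2) ^ (-(3/2) : ℝ) :=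
    Real.rpow_le_rpow_of_nonpos (by norm_num) h1 (by norm_num)
  have h3 : ((1:ℝ)/2) ^ (-(3/2) : ℝ) = (2:ℝ) ^ ((3/2) : ℝ) := by
    rw [one_div, Real.inv_rpow (by norm_num), ← Real.rpow_neg (by norm_num), neg_neg]
  have h4 : (2:ℝ) ^ ((3/2) : ℝ) ≤ (2:ℝ) ^ ((2:ℕ) : ℝ) :=
    Real.rpow_le_rpow_of_exponent_le one_le_two (by norm_num)
  have h5 : (2:ℝ) ^ ((2:ℕ) : ℝ) = 4 := by
    rw [Real.rpow_natCast]; norm_num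
  linarith

lemma half_integrable (α β : ℝ) (hβ : β < 2 * α + 3 / 2) :
    IntegrableOn
      (fun x : ℝ =>
        (cfun x ^ (α + 1) * x ^ (-β) + cfun (1 - x) ^ (α + 1) * (1 - x) ^ (-β) - 1) *
          (x * (1 - x)) ^ (-(3 / 2) : ℝ))
      (Ioo 0 (1/2)) := by
  set p : ℝ := 2 * (α + 1) - β - 3/2 with hp
  have hpgt : -1 < p := by rw [hp]; linarith
  set M : ℝ := max ((2:ℝ) ^ (α + 1)) ((3:ℝ) ^ (α + 1)) with hM
  have hM0 : 0 ≤ M := le_trans (Real.rpow_nonneg (by norm_num) _) (le_max_left _ _)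
  -- first piece A
  have hA : IntegrableOn
      (fun x : ℝ => cfun x ^ (α + 1) * x ^ (-β) * (x * (1 - x)) ^ (-(3 / 2) : ℝ))
      (Ioo 0 (1/2)) := by
    apply Integrable.mono' (((rpow_integrableOn_half hpgt).const_mul (M * 4)))
    · apply ContinuousOn.aestronglyMeasurable _ measurableSet_Ioo
      have hcc : Continuous cfun := by unfold cfun; fun_prop
      have h1 : ∀ x ∈ Ioo (0:ℝ) (1/2), cfun x ≠ 0 := by
        intro x hx
        have : (0:ℝ) < x ^ 2 * (3 - 2 * x) :=
          mul_pos (pow_pos hx.1 2) (by linarith [hx.1, hx.2])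
        simpa [cfun] using this.ne'
      apply ContinuousOn.mul
      · exact (hcc.continuousOn.rpow_const (fun x hx => Or.inl (h1 x hx))).mul
          (continuousOn_id.rpow_const (fun x hx => Or.inl hx.1.ne'))
      · exact (continuousOn_id.mul (continuousOn_const.sub continuousOn_id)).rpow_const
          (fun x hx => Or.inl (by have := hx.1; have := hx.2; simp only [Pi.mul_apply, Pi.sub_apply, id]; nlinarith))
    · filter_upwards [ae_restrict_mem measurableSet_Ioo] with x hx
      obtain ⟨hx0, hx1⟩ := hx
      have h1x : (0:ℝ) < 1 - x := by linarith
      have h32 : (0:ℝ) < 3 - 2*x := by linarith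
      -- rewrite the product of powers
      have e1 : cfun x ^ (α + 1) = x ^ (2 * (α+1)) * (3 - 2*x) ^ (α+1) := by
        rw [cfun, Real.mul_rpow (by positivity) h32.le, ← Real.rpow_natCast x 2,
          ← Real.rpow_mul hx0.le]
        norm_num
      have e2 : (x * (1 - x)) ^ (-(3 / 2) : ℝ)
          = x ^ (-(3/2) : ℝ) * (1 - x) ^ (-(3/2) : ℝ) :=
        Real.mul_rpow hx0.le h1x.le
      have e3 : x ^ (2 * (α+1)) * x ^ (-β) * x ^ (-(3/2) : ℝ) = x ^ p := by
        rw [← Real.rpow_add hx0, ← Real.rpow_add hx0, hp]; ring_nf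
      have hval : cfun x ^ (α + 1) * x ^ (-β) * (x * (1 - x)) ^ (-(3 / 2) : ℝ)
          = ((3 - 2*x) ^ (α+1) * (1 - x) ^ (-(3/2) : ℝ)) * x ^ p := by
        rw [e1, e2, ← e3]; ring
      have hnonneg : 0 ≤ cfun x ^ (α + 1) * x ^ (-β) * (x * (1 - x)) ^ (-(3 / 2) : ℝ) := by
        have : (0:ℝ) ≤ cfun x := by
          rw [cfun]; positivity
        positivity
      rw [Real.norm_eq_abs, abs_of_nonneg hnonneg, hval]
      have hb1 : (3 - 2*x) ^ (α+1) ≤ M := by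
        rcases le_or_gt 0 (α+1) with h | h
        · exact le_trans (Real.rpow_le_rpow h32.le (by linarith) h) (le_max_right _ _)
        · exact le_trans (Real.rpow_le_rpow_of_nonpos (by norm_num) (by linarith) h.le)
            (le_max_left _ _)
      have hb2 : (1 - x) ^ (-(3/2) : ℝ) ≤ 4 := one_sub_bound ⟨hx0, hx1⟩
      have hxp : 0 ≤ x ^ p := Real.rpow_nonneg hx0.le _
      have : (3 - 2*x) ^ (α+1) * (1 - x) ^ (-(3/2) : ℝ) ≤ M * 4 := by
        apply mul_le_mul hb1 hb2 (Real.rpow_nonneg h1x.le _) hM0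
      nlinarith [Real.rpow_nonneg h32.le (α+1), Real.rpow_nonneg h1x.le (-(3/2) : ℝ)]
  -- second piece B
  obtain ⟨C, hC0, hC⟩ := gfun_bound α β
  have hB : IntegrableOn
      (fun x : ℝ => (cfun (1 - x) ^ (α + 1) * (1 - x) ^ (-β) - 1) *
        (x * (1 - x)) ^ (-(3 / 2) : ℝ)) (Ioo 0 (1/2)) := by
    apply Integrable.mono'
      (((rpow_integrableOn_half (p := -(1/2)) (by norm_num)).const_mul (C * 4)))
    · apply ContinuousOn.aestronglyMeasurable _ measurableSet_Ioo
      have hcc : Continuous (fun x : ℝ => cfun (1 - x)) := by unfold cfun; fun_prop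
      have h1 : ∀ x ∈ Ioo (0:ℝ) (1/2), cfun (1 - x) ≠ 0 := by
        intro x hx
        have : (0:ℝ) < (1 - x) ^ 2 * (3 - 2 * (1 - x)) :=
          mul_pos (pow_pos (by linarith [hx.2]) 2) (by linarith [hx.1, hx.2])
        simpa [cfun] using this.ne'
      apply ContinuousOn.mul
      · apply ContinuousOn.sub _ continuousOn_const
        exact (hcc.continuousOn.rpow_const (fun x hx => Or.inl (h1 x hx))).mul
          ((continuousOn_const.sub continuousOn_id).rpow_const
            (fun x hx => Or.inl (by have := hx.2; simp only [Pi.sub_apply, id]; intro h; nlinarith)))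
      · exact (continuousOn_id.mul (continuousOn_const.sub continuousOn_id)).rpow_const
          (fun x hx => Or.inl (by have := hx.1; have := hx.2; simp only [Pi.mul_apply, Pi.sub_apply, id]; nlinarith))
    · filter_upwards [ae_restrict_mem measurableSet_Ioo] with x hx
      obtain ⟨hx0, hx1⟩ := hx
      have h1x : (0:ℝ) < 1 - x := by linarith
      have e2 : (x * (1 - x)) ^ (-(3 / 2) : ℝ)
          = x ^ (-(3/2) : ℝ) * (1 - x) ^ (-(3/2) : ℝ) :=
        Real.mul_rpow hx0.le h1x.le
      rw [norm_mul, Real.norm_eq_abs, Real.norm_eq_abs, e2, abs_mul,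
        abs_of_nonneg (Real.rpow_nonneg hx0.le _), abs_of_nonneg (Real.rpow_nonneg h1x.le _)]
      have hb : |cfun (1 - x) ^ (α + 1) * (1 - x) ^ (-β) - 1| ≤ C * x :=
        hC x ⟨hx0.le, hx1.le⟩
      have hb2 : (1 - x) ^ (-(3/2) : ℝ) ≤ 4 := one_sub_bound ⟨hx0, hx1⟩
      have e4 : x * x ^ (-(3/2) : ℝ) = x ^ (-(1/2) : ℝ) := by
        nth_rewrite 1 [← Real.rpow_one x]
        rw [← Real.rpow_add hx0]; norm_num
      calc |cfun (1 - x) ^ (α + 1) * (1 - x) ^ (-β) - 1|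
            * (x ^ (-(3/2) : ℝ) * (1 - x) ^ (-(3/2) : ℝ))
          ≤ (C * x) * (x ^ (-(3/2) : ℝ) * 4) := by
            apply mul_le_mul hb _ (by positivity) (by positivity)
            exact mul_le_mul_of_nonneg_left hb2 (Real.rpow_nonneg hx0.le _)
        _ = C * 4 * x ^ (-(1/2) : ℝ) := by rw [← e4]; ring
  have hAB := hA.add hB
  apply MeasureTheory.IntegrableOn.congr_fun hAB _ measurableSet_Ioo
  intro x _
  simp only [Pi.add_apply]
  ring

theorem integrable_I (α β : ℝ) (hβ : β < 2 * α + 3 / 2) :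
    MeasureTheory.IntegrableOn
      (fun x : ℝ =>
        (cfun x ^ (α + 1) * x ^ (-β) + cfun (1 - x) ^ (α + 1) * (1 - x) ^ (-β) - 1) *
          (x * (1 - x)) ^ (-(3 / 2) : ℝ))
      (Set.Ioo 0 1) := by
  set F : ℝ → ℝ := fun x =>
    (cfun x ^ (α + 1) * x ^ (-β) + cfun (1 - x) ^ (α + 1) * (1 - x) ^ (-β) - 1) *
      (x * (1 - x)) ^ (-(3 / 2) : ℝ) with hF
  have hsym : ∀ x : ℝ, F (1 - x) = F x := by
    intro x
    simp only [hF]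
    have h : (1:ℝ) - (1 - x) = x := by ring
    rw [h, mul_comm (1 - x) x]
    ring
  have h1 : IntegrableOn F (Ioo 0 (1/2)) := half_integrable α β hβ
  -- reflected half
  have h2 : IntegrableOn F (Ioo (1/2) 1) := by
    have hmp : MeasurePreserving (fun x : ℝ => 1 - x) volume volume :=
      Measure.measurePreserving_sub_left volume 1
    have hemb : MeasurableEmbedding (fun x : ℝ => 1 - x) :=
      (Homeomorph.subLeft (1:ℝ)).measurableEmbedding
    have hpre : (fun x : ℝ => 1 - x) ⁻¹' (Ioo 0 (1/2)) = Ioo (1/2) 1 := by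
      ext x
      simp only [mem_preimage, mem_Ioo]
      constructor <;> (intro h; constructor <;> linarith [h.1, h.2])
    have := (hmp.integrableOn_comp_preimage hemb (s := Ioo 0 (1/2)) (f := F)).mpr h1
    rw [hpre] at this
    have heq : (F ∘ fun x : ℝ => 1 - x) = F := by
      funext x; exact hsym x
    rwa [heq] at this
  have hunion : Ioo (0:ℝ) (1/2) ∪ Ico (1/2) 1 = Ioo (0:ℝ) 1 :=
    Ioo_union_Ico_eq_Ioo (by norm_num) (by norm_num)
  rw [← hunion]
  exact h1.union ((integrableOn_Ico_iff_integrableOn_Ioo).mpr h2)
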